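/- Let x ∈ (0,∞)^V satisfy 𝕶_{G,V'}(x) ≥ 0 for every V' ⊆ V, with equality for at least one V'. Let V_0 ⊆ V be minimal with respect to inclusion among subsets V' with 𝕶_{G,V'}(x) = 0. Then every vertex of V \ V_0 is adjacent in G to every vertex of V_0; that is, G is the graph join of the induced subgraph on V_0 with the induced subgraph on V \ V_0. (Lemma 4.5.) -/

import Mathlib

open scoped Classical ENNReal

set_option linter.unusedSectionVars false

variable {V : Type*} [Fintype V] [DecidableEq V]

/-- An admissible swap exchanges two consecutive letters that are adjacent in `G`. -/
def AdjSwap (G : SimpleGraph V) (w w' : List V) : Prop :=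
  ∃ (a b : List V) (u v : V), G.Adj u v ∧ w = a ++ u :: v :: b ∧ w' = a ++ v :: u :: b

/-- Two words are equivalent if one can be transformed into the other by finitely many
admissible swaps. -/
def WordEquiv (G : SimpleGraph V) : List V → List V → Prop :=
  Relation.ReflTransGen (AdjSwap G)

lemma adjSwap_symm (G : SimpleGraph V) : Symmetric (AdjSwap G) := by
  rintro w w' ⟨a, b, u, v, h, rfl, rfl⟩
  exact ⟨a, b, v, u, h.symm, rfl, rfl⟩

/-- The setoid of words modulo admissible swaps. -/
def wordSetoid (G : SimpleGraph V) : Setoid (List V) where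
  r := WordEquiv G
  iseqv := ⟨fun _ => Relation.ReflTransGen.refl,
    fun h => by
      have h' : Relation.ReflTransGen (AdjSwap G) _ _ := h
      clear h
      induction h' with
      | refl => exact Relation.ReflTransGen.refl
      | tail _ hs ih => exact Relation.ReflTransGen.head (adjSwap_symm G hs) ih,
    fun h h' => Relation.ReflTransGen.trans h h'⟩

/-- A word is `G`-reduced if between any two equal letters there is a letter distinct from
them and not adjacent to them. -/
def IsGReduced (G : SimpleGraph V) (w : List V) : Prop :=
  ∀ i j : Fin w.length, i < j → w.get i = w.get j →
    ∃ k : Fin w.length, i < k ∧ k < j ∧ w.get k ≠ w.get i ∧ ¬ G.Adj (w.get k) (w.get i)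

/-- The product `x_{w_1} ⋯ x_{w_ℓ}` depends only on the equivalence class of a word. -/
noncomputable def classProd (G : SimpleGraph V) (x : V → ℝ≥0∞) :
    Quotient (wordSetoid G) → ℝ≥0∞ :=
  Quotient.lift (fun w : List V => (w.map x).prod) (by
    intro a b h
    induction h with
    | refl => rfl
    | tail _ hs ih =>
        obtain ⟨a', b', u, v, huv, rfl, rfl⟩ := hs
        rw [ih]
        simp only [List.map_append, List.prod_append, List.map_cons, List.prod_cons]
        ring)

/-- `tildeF G x` : the sum over all equivalence classes of words of `∏ x_{w_i}`,
valued in `[0,∞]`. -/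
noncomputable def tildeF (G : SimpleGraph V) (x : V → ℝ) : ℝ≥0∞ :=
  ∑' c : Quotient (wordSetoid G), classProd G (fun v => ENNReal.ofReal (x v)) c

/-- `redF G x` : the sum over all equivalence classes of `G`-reduced words of `∏ x_{w_i}`,
valued in `[0,∞]`. -/
noncomputable def redF (G : SimpleGraph V) (x : V → ℝ) : ℝ≥0∞ :=
  ∑' c : {c : Quotient (wordSetoid G) // ∃ w, IsGReduced G w ∧ Quotient.mk (wordSetoid G) w = c},
    classProd G (fun v => ENNReal.ofReal (x v)) c.1

/-- The clique polynomial `𝕶_{G,V'}(x) = ∑_{cliques K ⊆ V'} (-1)^{|K|} ∏_{v ∈ K} x_v`. -/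
noncomputable def cliquePoly (G : SimpleGraph V) (V' : Finset V) (x : V → ℝ) : ℝ :=
  ∑ K ∈ V'.powerset.filter (fun K : Finset V => G.IsClique (K : Set V)),
    (-1 : ℝ) ^ K.card * ∏ v ∈ K, x v

/-- The Euclidean norm on `ℝ^V`. -/
noncomputable def eucNorm (x : V → ℝ) : ℝ := Real.sqrt (∑ v, x v ^ 2)

/-- `min_{V' ⊆ V} 𝕶_{G,V'}(x)`. -/
noncomputable def minK (G : SimpleGraph V) (x : V → ℝ) : ℝ :=
  Finset.univ.inf' ⟨∅, Finset.mem_univ _⟩ fun V' : Finset V => cliquePoly G V' x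

/-- `ρ(u) = inf {r ∈ [0,∞) : min_{V' ⊆ V} 𝕶_{G,V'}(r·u) = 0}`. -/
noncomputable def rho (G : SimpleGraph V) (u : V → ℝ) : ℝ :=
  sInf {r : ℝ | 0 ≤ r ∧ minK G (r • u) = 0}

/-- The region `R(G) = {x ∈ [0,1]^V : 𝕶_{G,V'}(x) > 0 for all V' ⊆ V}`. -/
def regionR (G : SimpleGraph V) : Set (V → ℝ) :=
  {x | (∀ v, x v ∈ Set.Icc (0 : ℝ) 1) ∧ ∀ V' : Finset V, 0 < cliquePoly G V' x}


lemma cliquePoly_insert (G : SimpleGraph V) (x : V → ℝ) (w : V) (S : Finset V) (hw : w ∉ S) :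
    cliquePoly G (insert w S) x
      = cliquePoly G S x - x w * cliquePoly G (S.filter (G.Adj w)) x := by
  classical
  unfold cliquePoly
  rw [← Finset.sum_filter_add_sum_filter_not
    (((insert w S).powerset).filter (fun K : Finset V => G.IsClique (K : Set V)))
    (fun K => w ∈ K)]
  have h2 : ((((insert w S).powerset).filter (fun K : Finset V => G.IsClique (K : Set V))).filter
      (fun K => w ∉ K)) = (S.powerset).filter (fun K : Finset V => G.IsClique (K : Set V)) := by
    ext K
    simp only [Finset.mem_filter, Finset.mem_powerset]
    constructor
    · rintro ⟨⟨hsub, hcl⟩, hwK⟩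
      refine ⟨fun v hv => ?_, hcl⟩
      rcases Finset.mem_insert.mp (hsub hv) with h | h
      · exact absurd (h ▸ hv) hwK
      · exact h
    · rintro ⟨hsub, hcl⟩
      exact ⟨⟨hsub.trans (Finset.subset_insert _ _), hcl⟩, fun hwK => hw (hsub hwK)⟩
  have h1 : ∑ K ∈ ((((insert w S).powerset).filter
        (fun K : Finset V => G.IsClique (K : Set V))).filter (fun K => w ∈ K)),
        ((-1 : ℝ) ^ K.card * ∏ v ∈ K, x v)
      = -(x w) * ∑ K ∈ ((S.filter (G.Adj w)).powerset).filter
        (fun K : Finset V => G.IsClique (K : Set V)),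
        ((-1 : ℝ) ^ K.card * ∏ v ∈ K, x v) := by
    rw [Finset.mul_sum]
    refine Finset.sum_nbij' (fun K => K.erase w) (fun K => insert w K) ?_ ?_ ?_ ?_ ?_
    · intro K hK
      simp only [Finset.mem_filter, Finset.mem_powerset] at hK ⊢
      obtain ⟨⟨hsub, hcl⟩, hwK⟩ := hK
      refine ⟨fun v hv => ?_, hcl.subset (by simp [Finset.erase_subset])⟩
      have hvK := Finset.mem_of_mem_erase hv
      have hne : v ≠ w := Finset.ne_of_mem_erase hv
      have hvS : v ∈ S := by
        rcases Finset.mem_insert.mp (hsub hvK) with h | h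
        · exact absurd h hne
        · exact h
      exact Finset.mem_filter.mpr ⟨hvS, (hcl (by exact_mod_cast hwK) (by exact_mod_cast hvK)
        (Ne.symm hne))⟩
    · intro K hK
      simp only [Finset.mem_filter, Finset.mem_powerset] at hK ⊢
      obtain ⟨hsub, hcl⟩ := hK
      refine ⟨⟨?_, ?_⟩, Finset.mem_insert_self _ _⟩
      · intro v hv
        rcases Finset.mem_insert.mp hv with h | h
        · exact h ▸ Finset.mem_insert_self _ _
        · exact Finset.mem_insert_of_mem (Finset.mem_filter.mp (hsub h)).1
      · rw [Finset.coe_insert]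
        exact hcl.insert (fun b hb _ => ((Finset.mem_filter.mp (hsub hb)).2))
    · intro K hK
      simp only [Finset.mem_filter] at hK
      exact Finset.insert_erase hK.2
    · intro K hK
      simp only [Finset.mem_filter, Finset.mem_powerset] at hK
      have hwK : w ∉ K := fun h => hw (Finset.mem_filter.mp (hK.1 h)).1
      exact Finset.erase_insert hwK
    · intro K hK
      simp only [Finset.mem_filter] at hK
      obtain ⟨_, hwK⟩ := hK
      have hcard : K.card = (K.erase w).card + 1 := by
        have := Finset.card_pos.mpr ⟨w, hwK⟩
        rw [Finset.card_erase_of_mem hwK]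
        omega
      rw [hcard, ← Finset.mul_prod_erase _ _ hwK]
      ring
  rw [h1, h2]
  ring

/-- Lemma 4.5: if `x ∈ (0,∞)^V`, all `𝕶_{G,V'}(x) ≥ 0`, and `V₀` is minimal
with `𝕶_{G,V₀}(x) = 0`, then every vertex outside `V₀` is adjacent to every vertex of `V₀`. -/
theorem join_decomposition_of_minimal_zero (G : SimpleGraph V) (x : V → ℝ)
    (hx : ∀ v, 0 < x v)
    (hnonneg : ∀ V' : Finset V, 0 ≤ cliquePoly G V' x)
    (V₀ : Finset V) (hV₀ : cliquePoly G V₀ x = 0)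
    (hmin : ∀ V' : Finset V, cliquePoly G V' x = 0 → V' ⊆ V₀ → V' = V₀) :
    ∀ w ∉ V₀, ∀ v ∈ V₀, G.Adj w v := by
  intro w hw v hv
  have key := cliquePoly_insert G x w V₀ hw
  rw [hV₀] at key
  have h1 : 0 ≤ cliquePoly G (insert w V₀) x := hnonneg _
  have hle : cliquePoly G (V₀.filter (G.Adj w)) x ≤ 0 := by
    by_contra h
    push_neg at h
    nlinarith [hx w]
  have hc0 : cliquePoly G (V₀.filter (G.Adj w)) x = 0 := le_antisymm hle (hnonneg _)
  have heq := hmin _ hc0 (Finset.filter_subset _ _)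
  have : v ∈ V₀.filter (G.Adj w) := by rw [heq]; exact hv
  exact (Finset.mem_filter.mp this).2
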